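/- Suppose 1 < p < q < ∞ and (u,v) is a pair of weights on ℝⁿ such that the Hardy–Littlewood maximal operator satisfies M : L^p(v) → L^q(u) and M : L^{q'}(u^{1-q'}) → L^{p'}(v^{1-p'}). Then for any dyadic grid 𝒟, any sparse family 𝒮 ⊂ 𝒟, and any R ∈ 𝒟, the sparse operator's outer truncation T^R satisfies the Sawyer testing conditions: (∫ T^R(v^{1-p'}χ_R)^q u dx)^{1/q} ≤ C(∫_R v^{1-p'} dx)^{1/p} and (∫ T^R(uχ_R)^{p'} v^{1-p'} dx)^{1/p'} ≤ C(∫_R u dx)^{1/q'}, with C depending only on n, p, q and the norms of M. -/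

import Mathlib

open MeasureTheory Set
open scoped ENNReal
noncomputable section

/-- Axis-parallel half-open cube with corner `a` and side length `l`. -/
def cube (n : ℕ) (a : Fin n → ℝ) (l : ℝ) : Set (Fin n → ℝ) :=
  Set.univ.pi fun i => Set.Ico (a i) (a i + l)

/-- A (generalized) dyadic grid in ℝⁿ. -/
structure DyadicGrid (n : ℕ) where
  carrier : Set (Set (Fin n → ℝ))
  shape : ∀ Q ∈ carrier, ∃ (a : Fin n → ℝ) (k : ℤ), Q = cube n a ((2 : ℝ) ^ k)
  nested : ∀ Q ∈ carrier, ∀ P ∈ carrier, (Q ∩ P).Nonempty → Q ⊆ P ∨ P ⊆ Q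
  partition : ∀ (k : ℤ) (x : Fin n → ℝ),
    ∃! Q, Q ∈ carrier ∧ (∃ a, Q = cube n a ((2 : ℝ) ^ k)) ∧ x ∈ Q

/-- Hardy–Littlewood maximal function: supremum of averages over axis-parallel
cubes containing `x`. -/
def hlMaximal (n : ℕ) (f : (Fin n → ℝ) → ℝ≥0∞) (x : Fin n → ℝ) : ℝ≥0∞ :=
  ⨆ (a : Fin n → ℝ) (l : ℝ) (_ : 0 < l) (_ : x ∈ cube n a l),
    (∫⁻ y in cube n a l, f y) / volume (cube n a l)

/-- Dyadic maximal function associated with a dyadic grid `D`. -/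
def dyMaximal {n : ℕ} (D : DyadicGrid n) (f : (Fin n → ℝ) → ℝ≥0∞) (x : Fin n → ℝ) : ℝ≥0∞ :=
  ⨆ (Q : Set (Fin n → ℝ)) (_ : Q ∈ D.carrier) (_ : x ∈ Q),
    (∫⁻ y in Q, f y) / volume Q

/-- A sparse family inside the dyadic grid `D`, given as an indexed family
`F k = {Q_j^k}_j`: the cubes at each generation are pairwise disjoint,
`Ω_{k+1} ⊆ Ω_k` where `Ω_k = ⋃₀ F k`, and `|Ω_{k+1} ∩ Q| ≤ |Q|/2` for `Q ∈ F k`. -/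
def IsSparse {n : ℕ} (D : DyadicGrid n) (F : ℤ → Set (Set (Fin n → ℝ))) : Prop :=
  (∀ k, F k ⊆ D.carrier) ∧ (∀ k, (F k).Pairwise Disjoint) ∧
  (∀ k, ⋃₀ F (k + 1) ⊆ ⋃₀ F k) ∧
  (∀ k, ∀ Q ∈ F k, volume (⋃₀ F (k + 1) ∩ Q) ≤ volume Q / 2)

/-- The sparse (positive dyadic) operator `𝒜 f = Σ_{Q ∈ 𝒮} f_Q χ_Q` associated
with the sparse family `F`. -/
def sparseOp {n : ℕ} (F : ℤ → Set (Set (Fin n → ℝ))) (f : (Fin n → ℝ) → ℝ≥0∞)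
    (x : Fin n → ℝ) : ℝ≥0∞ :=
  ∑' Q : {Q : Set (Fin n → ℝ) // ∃ k, Q ∈ F k},
    ((∫⁻ y in Q.1, f y) / volume Q.1) * Q.1.indicator 1 x

/-- Outer truncation of the sparse operator:
`T^R f = Σ_{Q ∈ 𝒮, Q ⊇ R} f_Q χ_Q`. -/
def outerOp {n : ℕ} (F : ℤ → Set (Set (Fin n → ℝ))) (R : Set (Fin n → ℝ))
    (f : (Fin n → ℝ) → ℝ≥0∞) (x : Fin n → ℝ) : ℝ≥0∞ :=
  ∑' Q : {Q : Set (Fin n → ℝ) // (∃ k, Q ∈ F k) ∧ R ⊆ Q},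
    ((∫⁻ y in Q.1, f y) / volume Q.1) * Q.1.indicator 1 x

/-! ### Auxiliary lemmas -/

section Aux
open Function

lemma sep_sum {ι : Type*} (t : ι → ℝ≥0∞) (M : ℝ≥0∞)
    (hb : ∀ i, t i ≤ M)
    (hsep : ∀ i j, i ≠ j → t i ≤ t j / 2 ∨ t j ≤ t i / 2) :
    ∑' i, t i ≤ 2 * M := by
  rcases eq_or_ne M ⊤ with hM | hM
  · simp [hM]
  rcases eq_or_ne M 0 with hM0 | hM0
  · have : ∀ i, t i = 0 := fun i => le_antisymm (hM0 ▸ hb i) zero_le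
    simp [this]
  rw [← tsum_subtype_support t]
  have hMpos : 0 < M.toReal := ENNReal.toReal_pos hM0 hM
  set c := M.toReal with hc
  have htfin : ∀ i : support t, t i.1 ≠ ⊤ := fun i => ne_top_of_le_ne_top hM (hb i.1)
  have htpos : ∀ i : support t, 0 < (t i.1).toReal :=
    fun i => ENNReal.toReal_pos i.2 (htfin i)
  have htle : ∀ i : support t, (t i.1).toReal ≤ c :=
    fun i => ENNReal.toReal_mono hM (hb i.1)
  set ψ : support t → ℕ := fun i => ⌊Real.logb 2 (c / (t i.1).toReal)⌋₊ with hψ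
  have hone_le : ∀ i : support t, 1 ≤ c / (t i.1).toReal := by
    intro i
    rw [le_div_iff₀ (htpos i)]
    simpa using htle i
  have hlogb_nonneg : ∀ i : support t, 0 ≤ Real.logb 2 (c / (t i.1).toReal) :=
    fun i => Real.logb_nonneg one_lt_two (hone_le i)
  have key : ∀ i j : support t, t i.1 ≤ t j.1 / 2 → ψ j + 1 ≤ ψ i := by
    intro i j h
    have hR : (t i.1).toReal ≤ (t j.1).toReal / 2 := by
      have h2 : t j.1 / 2 ≠ ⊤ := by
        simp only [ENNReal.div_eq_inv_mul]
        exact ENNReal.mul_ne_top (by norm_num) (htfin j)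
      have := ENNReal.toReal_mono h2 h
      rwa [ENNReal.toReal_div, ENNReal.toReal_ofNat] at this
    have hlog : Real.logb 2 (c / (t j.1).toReal) + 1 ≤ Real.logb 2 (c / (t i.1).toReal) := by
      have h1 : c / (t j.1).toReal * 2 ≤ c / (t i.1).toReal := by
        rw [div_mul_eq_mul_div, div_le_div_iff₀ (htpos j) (htpos i)]
        calc c * 2 * (t i.1).toReal ≤ c * 2 * ((t j.1).toReal / 2) := by
              apply mul_le_mul_of_nonneg_left hR (by positivity)
          _ = c * (t j.1).toReal := by ring
      calc Real.logb 2 (c / (t j.1).toReal) + 1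
          = Real.logb 2 (c / (t j.1).toReal * 2) := by
            rw [Real.logb_mul (ne_of_gt (div_pos hMpos (htpos j))) (by norm_num)]
            simp
        _ ≤ Real.logb 2 (c / (t i.1).toReal) := by
            exact Real.logb_le_logb_of_le one_lt_two (mul_pos (div_pos hMpos (htpos j)) two_pos) h1
    calc ψ j + 1 = ⌊Real.logb 2 (c / (t j.1).toReal) + 1⌋₊ := by
          rw [Nat.floor_add_one (hlogb_nonneg j)]
      _ ≤ ψ i := Nat.floor_mono hlog
  have hinj : Function.Injective ψ := by
    intro i j hij
    by_contra hne
    have hne' : i.1 ≠ j.1 := fun h => hne (Subtype.ext h)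
    rcases hsep i.1 j.1 hne' with h | h
    · have := key i j h; omega
    · have := key j i h; omega
  have hbound : ∀ i : support t, t i.1 ≤ M * 2⁻¹ ^ (ψ i) := by
    intro i
    have h2 : ((2:ℝ≥0∞)) ^ (ψ i) ≠ 0 := by positivity
    have h2' : ((2:ℝ≥0∞)) ^ (ψ i) ≠ ⊤ := by
      exact ENNReal.pow_ne_top (by norm_num)
    have : M * 2⁻¹ ^ (ψ i) = M / 2 ^ (ψ i) := by
      rw [ENNReal.div_eq_inv_mul, ← ENNReal.inv_pow, mul_comm]
    rw [this, ENNReal.le_div_iff_mul_le (Or.inl h2) (Or.inl h2')]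
    have hr : (t i.1).toReal * 2 ^ (ψ i) ≤ c := by
      have hfl : (ψ i : ℝ) ≤ Real.logb 2 (c / (t i.1).toReal) := Nat.floor_le (hlogb_nonneg i)
      have h2le : (2:ℝ) ^ (ψ i) ≤ c / (t i.1).toReal := by
        calc (2:ℝ) ^ (ψ i) = (2:ℝ) ^ ((ψ i : ℝ)) := by rw [Real.rpow_natCast]
          _ ≤ (2:ℝ) ^ (Real.logb 2 (c / (t i.1).toReal)) :=
              Real.rpow_le_rpow_of_exponent_le one_lt_two.le hfl
          _ = c / (t i.1).toReal := Real.rpow_logb two_pos (by norm_num) (div_pos hMpos (htpos i))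
      calc (t i.1).toReal * 2 ^ (ψ i) ≤ (t i.1).toReal * (c / (t i.1).toReal) :=
            mul_le_mul_of_nonneg_left h2le (htpos i).le
        _ = c := by
            rw [mul_div_cancel₀ _ (htpos i).ne']
    calc t i.1 * 2 ^ (ψ i) = ENNReal.ofReal ((t i.1).toReal * 2 ^ (ψ i)) := by
          rw [ENNReal.ofReal_mul (htpos i).le, ENNReal.ofReal_toReal (htfin i),
            ENNReal.ofReal_pow (by norm_num), ENNReal.ofReal_ofNat]
      _ ≤ ENNReal.ofReal c := ENNReal.ofReal_le_ofReal hr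
      _ = M := ENNReal.ofReal_toReal hM
  calc ∑' i : support t, t i.1 ≤ ∑' n : ℕ, M * 2⁻¹ ^ n :=
        Summable.tsum_le_tsum_of_inj ψ hinj (fun _ _ => zero_le) hbound ENNReal.summable ENNReal.summable
    _ = M * (1 - 2⁻¹)⁻¹ := by rw [ENNReal.tsum_mul_left, ENNReal.tsum_geometric]
    _ = 2 * M := by rw [ENNReal.one_sub_inv_two, mul_comm]; norm_num

lemma cube_measurable (n : ℕ) (a : Fin n → ℝ) (l : ℝ) : MeasurableSet (cube n a l) :=
  MeasurableSet.univ_pi fun _ => measurableSet_Ico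

lemma cube_volume (n : ℕ) (a : Fin n → ℝ) (l : ℝ) :
    volume (cube n a l) = ENNReal.ofReal l ^ n := by
  rw [cube, volume_pi_pi]
  simp [Real.volume_Ico]

lemma cube_nonempty (n : ℕ) (a : Fin n → ℝ) {l : ℝ} (hl : 0 < l) : (cube n a l).Nonempty := by
  rw [cube, Set.univ_pi_nonempty_iff]
  intro i
  exact ⟨a i, by simp [hl.le], by simp [hl]⟩

lemma cube_vol_pos (n : ℕ) (a : Fin n → ℝ) {l : ℝ} (hl : 0 < l) : 0 < volume (cube n a l) := by
  rw [cube_volume]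
  exact ENNReal.pow_pos (ENNReal.ofReal_pos.mpr hl) n

lemma cube_vol_ne_top (n : ℕ) (a : Fin n → ℝ) (l : ℝ) : volume (cube n a l) ≠ ⊤ := by
  rw [cube_volume]
  exact ENNReal.pow_ne_top ENNReal.ofReal_ne_top

lemma grid_mem_facts {n : ℕ} (D : DyadicGrid n) {Q : Set (Fin n → ℝ)} (hQ : Q ∈ D.carrier) :
    MeasurableSet Q ∧ Q.Nonempty ∧ 0 < volume Q ∧ volume Q ≠ ⊤ := by
  obtain ⟨a, k, rfl⟩ := D.shape Q hQ
  have h2 : (0:ℝ) < 2 ^ k := by positivity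
  exact ⟨cube_measurable n a _, cube_nonempty n a h2, cube_vol_pos n a h2, cube_vol_ne_top n a _⟩

lemma sparse_chain {n : ℕ} {D : DyadicGrid n} {F : ℤ → Set (Set (Fin n → ℝ))}
    (hF : IsSparse D F) {k m : ℤ} (hkm : k ≤ m) : ⋃₀ F m ⊆ ⋃₀ F k := by
  refine Int.le_induction (motive := fun m _ => ⋃₀ F m ⊆ ⋃₀ F k) subset_rfl
    (fun m _ ih => (hF.2.2.1 m).trans ih) m hkm

lemma sparse_halving {n : ℕ} {D : DyadicGrid n} {F : ℤ → Set (Set (Fin n → ℝ))}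
    (hF : IsSparse D F) {R Q Q' : Set (Fin n → ℝ)} (hRne : R.Nonempty) {k k' : ℤ}
    (hk : k < k') (hQ : Q ∈ F k) (hQ' : Q' ∈ F k') (hRQ : R ⊆ Q) (hRQ' : R ⊆ Q') :
    volume Q' ≤ volume Q / 2 := by
  have hQc : Q ∈ D.carrier := hF.1 k hQ
  have hQ'c : Q' ∈ D.carrier := hF.1 k' hQ'
  obtain ⟨_, _, hQpos, hQfin⟩ := grid_mem_facts D hQc
  have hsub : Q' ⊆ ⋃₀ F (k + 1) :=
    (Set.subset_sUnion_of_mem hQ').trans (sparse_chain hF (by omega))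
  obtain ⟨x, hx⟩ := hRne
  rcases D.nested Q hQc Q' hQ'c ⟨x, hRQ hx, hRQ' hx⟩ with h | h
  · exfalso
    have : volume Q ≤ volume Q / 2 := by
      calc volume Q = volume (⋃₀ F (k + 1) ∩ Q) := by
            rw [Set.inter_eq_self_of_subset_right (h.trans hsub)]
        _ ≤ volume Q / 2 := hF.2.2.2 k Q hQ
    exact absurd this (not_le.mpr (ENNReal.half_lt_self hQpos.ne' hQfin))
  · calc volume Q' ≤ volume (⋃₀ F (k + 1) ∩ Q) := measure_mono (Set.subset_inter hsub h)
      _ ≤ volume Q / 2 := hF.2.2.2 k Q hQ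

lemma avg_le_hlMaximal {n : ℕ} (f : (Fin n → ℝ) → ℝ≥0∞) {x : Fin n → ℝ}
    {a : Fin n → ℝ} {l : ℝ} (hl : 0 < l) (hx : x ∈ cube n a l) :
    (∫⁻ y in cube n a l, f y) / volume (cube n a l) ≤ hlMaximal n f x := by
  rw [hlMaximal]
  exact le_iSup_of_le a (le_iSup_of_le l (le_iSup_of_le hl (le_iSup_of_le hx le_rfl)))

lemma lintegral_indicator_of_subset {n : ℕ} {R Q : Set (Fin n → ℝ)} (hR : MeasurableSet R)
    (hRQ : R ⊆ Q) (g : (Fin n → ℝ) → ℝ≥0∞) :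
    ∫⁻ y in Q, R.indicator g y = ∫⁻ y in R, g y := by
  rw [lintegral_indicator hR, Measure.restrict_restrict hR,
    Set.inter_eq_self_of_subset_left hRQ]

lemma ennreal_div_two_mul (A v : ℝ≥0∞) : A / (2 * v) = A / v / 2 := by
  rw [div_eq_mul_inv, ENNReal.mul_inv (Or.inl (by norm_num)) (Or.inl (by norm_num)),
    div_eq_mul_inv, div_eq_mul_inv, mul_comm (2:ℝ≥0∞)⁻¹ v⁻¹, ← mul_assoc]

lemma outer_le_two_hlMaximal {n : ℕ} {D : DyadicGrid n} {F : ℤ → Set (Set (Fin n → ℝ))}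
    (hF : IsSparse D F) {R : Set (Fin n → ℝ)} (hRc : R ∈ D.carrier)
    (g : (Fin n → ℝ) → ℝ≥0∞) (x : Fin n → ℝ) :
    outerOp F R (R.indicator g) x ≤ 2 * hlMaximal n (R.indicator g) x := by
  obtain ⟨hRmeas, hRne, -, -⟩ := grid_mem_facts D hRc
  rw [outerOp]
  apply sep_sum
  · rintro ⟨Q, ⟨k, hQk⟩, hRQ⟩
    by_cases hx : x ∈ Q
    · simp only [Set.indicator_of_mem hx, Pi.one_apply, mul_one]
      obtain ⟨a, j, rfl⟩ := D.shape Q (hF.1 k hQk)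
      exact avg_le_hlMaximal _ (by positivity) hx
    · simp [Set.indicator_of_notMem hx]
  · rintro ⟨Q, ⟨k, hQk⟩, hRQ⟩ ⟨Q', ⟨k', hQ'k⟩, hRQ'⟩ hne
    by_cases hx : x ∈ Q
    swap
    · left; simp [Set.indicator_of_notMem hx]
    by_cases hx' : x ∈ Q'
    swap
    · right; simp [Set.indicator_of_notMem hx']
    simp only [Set.indicator_of_mem hx, Set.indicator_of_mem hx', Pi.one_apply, mul_one]
    have hQne : Q ≠ Q' := fun h => hne (Subtype.ext h)
    rw [lintegral_indicator_of_subset hRmeas hRQ, lintegral_indicator_of_subset hRmeas hRQ']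
    set A := ∫⁻ y in R, g y with hA
    have main : ∀ (P P' : Set (Fin n → ℝ)) (m m' : ℤ), m < m' → P ∈ F m → P' ∈ F m' →
        R ⊆ P → R ⊆ P' → A / volume P ≤ A / volume P' / 2 := by
      intro P P' m m' hmm hPm hP'm hRP hRP'
      have hv := sparse_halving hF hRne hmm hPm hP'm hRP hRP'
      have h2v : 2 * volume P' ≤ volume P := by
        calc 2 * volume P' ≤ 2 * (volume P / 2) := mul_le_mul_right hv 2
          _ = volume P / 2 * 2 := mul_comm _ _
          _ = volume P := ENNReal.div_mul_cancel (by norm_num) (by norm_num)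
      calc A / volume P ≤ A / (2 * volume P') := ENNReal.div_le_div_left h2v A
        _ = A / volume P' / 2 := ennreal_div_two_mul _ _
    rcases lt_trichotomy k k' with h | h | h
    · left; exact main Q Q' k k' h hQk hQ'k hRQ hRQ'
    · exfalso
      subst h
      obtain ⟨y, hy⟩ := hRne
      exact Set.disjoint_left.mp (hF.2.1 k hQk hQ'k hQne) (hRQ hy) (hRQ' hy)
    · right; exact main Q' Q k' k h hQ'k hQk hRQ' hRQ

end Aux

lemma testing_step {n : ℕ} {D : DyadicGrid n} {F : ℤ → Set (Set (Fin n → ℝ))}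
    (hF : IsSparse D F) {R : Set (Fin n → ℝ)} (hR : R ∈ D.carrier)
    (g w : (Fin n → ℝ) → ℝ≥0∞) {s : ℝ} (hs : 0 < s) :
    (∫⁻ x, outerOp F R (R.indicator g) x ^ s * w x) ^ (1/s)
      ≤ 2 * (∫⁻ x, hlMaximal n (R.indicator g) x ^ s * w x) ^ (1/s) := by
  calc (∫⁻ x, outerOp F R (R.indicator g) x ^ s * w x) ^ (1/s)
      ≤ (∫⁻ x, (2 * hlMaximal n (R.indicator g) x) ^ s * w x) ^ (1/s) := by
        gcongr with x
        · exact outer_le_two_hlMaximal hF hR g x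
    _ = 2 * (∫⁻ x, hlMaximal n (R.indicator g) x ^ s * w x) ^ (1/s) := by
        have h1 : ∀ x, (2 * hlMaximal n (R.indicator g) x) ^ s * w x
            = (2:ℝ≥0∞) ^ s * (hlMaximal n (R.indicator g) x ^ s * w x) := by
          intro x
          rw [ENNReal.mul_rpow_of_nonneg _ _ hs.le, mul_assoc]
        simp_rw [h1]
        rw [lintegral_const_mul' _ _ (by
          exact ENNReal.rpow_ne_top_of_nonneg hs.le (by norm_num)),
          ENNReal.mul_rpow_of_nonneg _ _ (by positivity : (0:ℝ) ≤ 1/s),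
          ← ENNReal.rpow_mul, mul_one_div, div_self hs.ne', ENNReal.rpow_one]

lemma weight_ineq_A {p p' : ℝ} (hp : 1 < p) (hp' : p' = p / (p - 1)) (a : ℝ≥0∞) :
    (a ^ (1 - p')) ^ p * a ≤ a ^ (1 - p') := by
  have hp0 : 0 < p := by linarith
  have hp'1 : 1 < p' := by
    rw [hp']
    rw [lt_div_iff₀ (by linarith)]
    linarith
  rcases eq_or_ne a 0 with rfl | h0
  · rw [mul_zero]
    exact zero_le
  rcases eq_or_ne a ⊤ with rfl | htop
  · rw [ENNReal.top_rpow_of_neg (by linarith), ENNReal.zero_rpow_of_pos hp0, zero_mul]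
  · have harith : (1 - p') * p + 1 = 1 - p' := by
      have h1 : p - 1 ≠ 0 := by linarith
      rw [hp']
      field_simp
      ring
    calc (a ^ (1 - p')) ^ p * a = a ^ ((1 - p') * p) * a ^ (1:ℝ) := by
          rw [← ENNReal.rpow_mul, ENNReal.rpow_one]
      _ = a ^ ((1 - p') * p + 1) := (ENNReal.rpow_add _ _ h0 htop).symm
      _ = a ^ (1 - p') := by rw [harith]
      _ ≤ a ^ (1 - p') := le_rfl

lemma weight_ineq_B {q' : ℝ} (hq' : 1 < q') (a : ℝ≥0∞) :
    a ^ q' * a ^ (1 - q') ≤ a := by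
  have hq0 : 0 < q' := by linarith
  rcases eq_or_ne a 0 with rfl | h0
  · rw [ENNReal.zero_rpow_of_pos hq0, zero_mul]
  rcases eq_or_ne a ⊤ with rfl | htop
  · have h : (⊤:ℝ≥0∞) ^ (1 - q') = 0 := ENNReal.top_rpow_of_neg (by linarith)
    rw [h, mul_zero]
    exact zero_le
  · rw [← ENNReal.rpow_add _ _ h0 htop]
    norm_num

lemma lintegral_weight_A {n : ℕ} {R : Set (Fin n → ℝ)} (hRmeas : MeasurableSet R)
    {p p' : ℝ} (hp : 1 < p) (hp' : p' = p / (p - 1)) (v : (Fin n → ℝ) → ℝ≥0∞) :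
    ∫⁻ x, (R.indicator (fun y => v y ^ (1 - p')) x) ^ p * v x ≤ ∫⁻ x in R, v x ^ (1 - p') := by
  rw [← lintegral_indicator hRmeas]
  apply lintegral_mono
  intro x
  by_cases hx : x ∈ R
  · simp only [Set.indicator_of_mem hx]
    exact weight_ineq_A hp hp' (v x)
  · simp [Set.indicator_of_notMem hx, ENNReal.zero_rpow_of_pos (by linarith : (0:ℝ) < p)]

lemma lintegral_weight_B {n : ℕ} {R : Set (Fin n → ℝ)} (hRmeas : MeasurableSet R)
    {q' : ℝ} (hq' : 1 < q') (u : (Fin n → ℝ) → ℝ≥0∞) :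
    ∫⁻ x, (R.indicator u x) ^ q' * u x ^ (1 - q') ≤ ∫⁻ x in R, u x := by
  rw [← lintegral_indicator hRmeas]
  apply lintegral_mono
  intro x
  by_cases hx : x ∈ R
  · simp only [Set.indicator_of_mem hx]
    exact weight_ineq_B hq' (u x)
  · simp [Set.indicator_of_notMem hx, ENNReal.zero_rpow_of_pos (by linarith : (0:ℝ) < q')]
/-- if `M : L^p(v) → L^q(u)` and
`M : L^{q'}(u^{1-q'}) → L^{p'}(v^{1-p'})`, then the outer truncations `T^R` of
sparse operators satisfy both Sawyer testing conditions, with constant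
depending only on `n, p, q` and the norms of `M`. -/
theorem stmt12 (n : ℕ) (p q p' q' : ℝ) (hp : 1 < p) (hpq : p < q)
    (hp' : p' = p / (p - 1)) (hq' : q' = q / (q - 1))
    (N₁ N₂ : ℝ≥0∞) (hN₁ : N₁ ≠ ⊤) (hN₂ : N₂ ≠ ⊤) :
    ∃ C : ℝ≥0∞, C ≠ ⊤ ∧
      ∀ u v : (Fin n → ℝ) → ℝ≥0∞,
        (∀ f : (Fin n → ℝ) → ℝ≥0∞,
          (∫⁻ x, hlMaximal n f x ^ q * u x) ^ (1 / q)
            ≤ N₁ * (∫⁻ x, f x ^ p * v x) ^ (1 / p)) →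
        (∀ f : (Fin n → ℝ) → ℝ≥0∞,
          (∫⁻ x, hlMaximal n f x ^ p' * v x ^ (1 - p')) ^ (1 / p')
            ≤ N₂ * (∫⁻ x, f x ^ q' * u x ^ (1 - q')) ^ (1 / q')) →
        ∀ (D : DyadicGrid n) (F : ℤ → Set (Set (Fin n → ℝ))), IsSparse D F →
          ∀ R ∈ D.carrier,
            (∫⁻ x, outerOp F R (R.indicator fun y => v y ^ (1 - p')) x ^ q * u x) ^ (1 / q)
                ≤ C * (∫⁻ x in R, v x ^ (1 - p')) ^ (1 / p) ∧
            (∫⁻ x, outerOp F R (R.indicator u) x ^ p' * v x ^ (1 - p')) ^ (1 / p')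
                ≤ C * (∫⁻ x in R, u x) ^ (1 / q') := by
  have hq1 : 1 < q := hp.trans hpq
  have hp0 : 0 < p := by linarith
  have hq0 : 0 < q := by linarith
  have hp'1 : 1 < p' := by
    rw [hp', lt_div_iff₀ (by linarith)]
    linarith
  have hq'1 : 1 < q' := by
    rw [hq', lt_div_iff₀ (by linarith)]
    linarith
  refine ⟨2 * N₁ + 2 * N₂, ?_, ?_⟩
  · exact ENNReal.add_ne_top.mpr
      ⟨ENNReal.mul_ne_top (by norm_num) hN₁, ENNReal.mul_ne_top (by norm_num) hN₂⟩
  intro u v h1 h2 D F hF R hR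
  obtain ⟨hRmeas, hRne, hRpos, hRfin⟩ := grid_mem_facts D hR
  constructor
  · calc (∫⁻ x, outerOp F R (R.indicator fun y => v y ^ (1 - p')) x ^ q * u x) ^ (1 / q)
        ≤ 2 * (∫⁻ x, hlMaximal n (R.indicator fun y => v y ^ (1 - p')) x ^ q * u x) ^ (1 / q) :=
          testing_step hF hR _ u hq0
      _ ≤ 2 * (N₁ * (∫⁻ x, (R.indicator fun y => v y ^ (1 - p')) x ^ p * v x) ^ (1 / p)) :=
          mul_le_mul_right (h1 _) 2
      _ ≤ 2 * (N₁ * (∫⁻ x in R, v x ^ (1 - p')) ^ (1 / p)) := by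
          exact mul_le_mul_right (mul_le_mul_right
            (ENNReal.rpow_le_rpow (lintegral_weight_A hRmeas hp hp' v) (by positivity)) N₁) 2
      _ = 2 * N₁ * (∫⁻ x in R, v x ^ (1 - p')) ^ (1 / p) := by ring
      _ ≤ (2 * N₁ + 2 * N₂) * (∫⁻ x in R, v x ^ (1 - p')) ^ (1 / p) :=
          mul_le_mul_left (self_le_add_right _ _) _
  · calc (∫⁻ x, outerOp F R (R.indicator u) x ^ p' * v x ^ (1 - p')) ^ (1 / p')
        ≤ 2 * (∫⁻ x, hlMaximal n (R.indicator u) x ^ p' * v x ^ (1 - p')) ^ (1 / p') :=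
          testing_step hF hR _ _ (by linarith)
      _ ≤ 2 * (N₂ * (∫⁻ x, (R.indicator u) x ^ q' * u x ^ (1 - q')) ^ (1 / q')) :=
          mul_le_mul_right (h2 _) 2
      _ ≤ 2 * (N₂ * (∫⁻ x in R, u x) ^ (1 / q')) := by
          exact mul_le_mul_right (mul_le_mul_right
            (ENNReal.rpow_le_rpow (lintegral_weight_B hRmeas hq'1 u) (by positivity)) N₂) 2
      _ = 2 * N₂ * (∫⁻ x in R, u x) ^ (1 / q') := by ring
      _ ≤ (2 * N₁ + 2 * N₂) * (∫⁻ x in R, u x) ^ (1 / q') :=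
          mul_le_mul_left (self_le_add_left _ _) _
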